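/- If λ, μ ∈ ℂ are distinct, u ∈ null(M(λ)) and v ∈ null(M(μ)) are linearly independent vectors in ℂ², then the unique matrix X ∈ M₂(ℂ) with Xu = λu and Xv = μv satisfies Xⁿ + A_{n-1}X^{n-1} + ... + A₀ = 0. -/

import Mathlib

open Matrix

/-- A 2×2 matrix killing two linearly independent vectors is zero. -/
lemma sum_mulVec' {ι : Type*} [DecidableEq ι] (s : Finset ι) (M : ι → Matrix (Fin 2) (Fin 2) ℂ)
    (u : Fin 2 → ℂ) : (∑ i ∈ s, M i).mulVec u = ∑ i ∈ s, (M i).mulVec u := by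
  induction s using Finset.induction_on with
  | empty => simp [Matrix.zero_mulVec]
  | insert _ _ h ih => simp [Finset.sum_insert h, Matrix.add_mulVec, ih]

lemma zero_of_kills (u v : Fin 2 → ℂ) (hli : LinearIndependent ℂ ![u, v])
    (N : Matrix (Fin 2) (Fin 2) ℂ) (hu : N.mulVec u = 0) (hv : N.mulVec v = 0) : N = 0 := by
  have hcard : Fintype.card (Fin 2) = Module.finrank ℂ (Fin 2 → ℂ) := by simp
  let b : Module.Basis (Fin 2) ℂ (Fin 2 → ℂ) := basisOfLinearIndependentOfCardEqFinrank hli hcard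
  have hb : ∀ i, b i = ![u, v] i := fun i => by
    simp [b, coe_basisOfLinearIndependentOfCardEqFinrank]
  have h0 : Matrix.toLin' N = 0 := by
    apply b.ext
    intro i
    fin_cases i <;> simp [hb, Matrix.toLin'_apply, hu, hv]
  have := Matrix.toLin'.injective (h0.trans (map_zero Matrix.toLin').symm)
  simpa using this

theorem stmt8 (n : ℕ) (hn : 1 ≤ n) (A : Fin n → Matrix (Fin 2) (Fin 2) ℂ)
    (lam mu : ℂ) (hlm : lam ≠ mu) (u v : Fin 2 → ℂ)
    (hli : LinearIndependent ℂ ![u, v])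
    (hu : (lam ^ n • (1 : Matrix (Fin 2) (Fin 2) ℂ) + ∑ i : Fin n, lam ^ (i : ℕ) • A i).mulVec u = 0)
    (hv : (mu ^ n • (1 : Matrix (Fin 2) (Fin 2) ℂ) + ∑ i : Fin n, mu ^ (i : ℕ) • A i).mulVec v = 0) :
    (∃! X : Matrix (Fin 2) (Fin 2) ℂ, X.mulVec u = lam • u ∧ X.mulVec v = mu • v) ∧
    (∀ X : Matrix (Fin 2) (Fin 2) ℂ, X.mulVec u = lam • u → X.mulVec v = mu • v →
      X ^ n + ∑ i : Fin n, A i * X ^ (i : ℕ) = 0) := by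
  have hcard : Fintype.card (Fin 2) = Module.finrank ℂ (Fin 2 → ℂ) := by simp
  let b : Module.Basis (Fin 2) ℂ (Fin 2 → ℂ) := basisOfLinearIndependentOfCardEqFinrank hli hcard
  have hb : ∀ i, b i = ![u, v] i := fun i => by
    simp [b, coe_basisOfLinearIndependentOfCardEqFinrank]
  constructor
  · -- existence and uniqueness
    refine ⟨LinearMap.toMatrix' (b.constr ℂ ![lam • u, mu • v]), ⟨?_, ?_⟩, ?_⟩
    · have : u = b 0 := by rw [hb]; rfl
      rw [← Matrix.toLin'_apply, Matrix.toLin'_toMatrix', this, Module.Basis.constr_basis]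
      rfl
    · have : v = b 1 := by rw [hb]; rfl
      rw [← Matrix.toLin'_apply, Matrix.toLin'_toMatrix', this, Module.Basis.constr_basis]
      rfl
    · rintro Y ⟨hYu, hYv⟩
      have h0u : (LinearMap.toMatrix' (b.constr ℂ ![lam • u, mu • v])).mulVec u = lam • u := by
        have : u = b 0 := by rw [hb]; rfl
        rw [← Matrix.toLin'_apply, Matrix.toLin'_toMatrix', this, Module.Basis.constr_basis]; rfl
      have h0v : (LinearMap.toMatrix' (b.constr ℂ ![lam • u, mu • v])).mulVec v = mu • v := by
        have : v = b 1 := by rw [hb]; rfl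
        rw [← Matrix.toLin'_apply, Matrix.toLin'_toMatrix', this, Module.Basis.constr_basis]; rfl
      have := zero_of_kills u v hli (Y - LinearMap.toMatrix' (b.constr ℂ ![lam • u, mu • v]))
        (by rw [Matrix.sub_mulVec, hYu, h0u, sub_self])
        (by rw [Matrix.sub_mulVec, hYv, h0v, sub_self])
      linear_combination (norm := abel) this
  · intro X hXu hXv
    have hpowu : ∀ k : ℕ, (X ^ k).mulVec u = lam ^ k • u := by
      intro k; induction k with
      | zero => simp
      | succ k ih =>
        rw [pow_succ, ← Matrix.mulVec_mulVec, hXu, Matrix.mulVec_smul, ih, pow_succ]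
        rw [smul_smul, mul_comm]
    have hpowv : ∀ k : ℕ, (X ^ k).mulVec v = mu ^ k • v := by
      intro k; induction k with
      | zero => simp
      | succ k ih =>
        rw [pow_succ, ← Matrix.mulVec_mulVec, hXv, Matrix.mulVec_smul, ih, pow_succ]
        rw [smul_smul, mul_comm]
    apply zero_of_kills u v hli
    · have : (X ^ n + ∑ i : Fin n, A i * X ^ (i : ℕ)).mulVec u
          = (lam ^ n • (1 : Matrix (Fin 2) (Fin 2) ℂ) + ∑ i : Fin n, lam ^ (i : ℕ) • A i).mulVec u := by
        rw [Matrix.add_mulVec, Matrix.add_mulVec, hpowu]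
        congr 1
        · rw [Matrix.smul_mulVec, Matrix.one_mulVec]
        · rw [sum_mulVec', sum_mulVec']
          refine Finset.sum_congr rfl fun i _ => ?_
          rw [← Matrix.mulVec_mulVec, hpowu, Matrix.mulVec_smul, Matrix.smul_mulVec]
      rw [this, hu]
    · have : (X ^ n + ∑ i : Fin n, A i * X ^ (i : ℕ)).mulVec v
          = (mu ^ n • (1 : Matrix (Fin 2) (Fin 2) ℂ) + ∑ i : Fin n, mu ^ (i : ℕ) • A i).mulVec v := by
        rw [Matrix.add_mulVec, Matrix.add_mulVec, hpowv]
        congr 1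
        · rw [Matrix.smul_mulVec, Matrix.one_mulVec]
        · rw [sum_mulVec', sum_mulVec']
          refine Finset.sum_congr rfl fun i _ => ?_
          rw [← Matrix.mulVec_mulVec, hpowv, Matrix.mulVec_smul, Matrix.smul_mulVec]
      rw [this, hv]
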